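/- Let n, m ≥ 1, v₀, …, v_{n−1} ∈ ℝ^d and w₀, …, w_{m−1} ∈ ℝ^d, and let u = (v₀, …, v_{n−1}, w₀, …, w_{m−1}) be the concatenated tuple of length n + m. Then the convex join { λ p₁ + (1−λ) p₂ : p₁ ∈ C(v), p₂ ∈ C(w), λ ∈ [0,1] } of the chain-form sets C(v) and C(w) equals the chain-form set C(u) of the concatenation, which uses n + m − 1 = (n−1) + (m−1) + 1 basis vectors. -/

import Mathlib

/-- The chain-form set of a tuple of points `x₀, …, x_N ∈ ℝ^d`:
`{ x_N + Σ_{i=0}^{N-1} (∏_{k=i}^{N-1} α_k)(x_i − x_{i+1}) : α ∈ [0,1]^N }`. -/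
def chainForm {d N : ℕ} (x : Fin (N + 1) → (Fin d → ℝ)) : Set (Fin d → ℝ) :=
  {y : Fin d → ℝ | ∃ α : Fin N → ℝ, (∀ k, α k ∈ Set.Icc (0 : ℝ) 1) ∧
    y = x (Fin.last N) +
      ∑ i : Fin N, (∏ k ∈ Finset.Ici i, α k) • (x i.castSucc - x i.succ)}

open Finset

/-- ℕ-indexed chain point. -/
noncomputable def nch {d : ℕ} (X : ℕ → (Fin d → ℝ)) (N : ℕ) (a : ℕ → ℝ) : Fin d → ℝ :=
  X N + ∑ i ∈ Finset.range N, (∏ k ∈ Finset.Ico i N, a k) • (X i - X (i + 1))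

lemma nch_congr {d : ℕ} (X : ℕ → (Fin d → ℝ)) (N : ℕ) {a a' : ℕ → ℝ}
    (h : ∀ k < N, a k = a' k) : nch X N a = nch X N a' := by
  unfold nch
  congr 1
  refine Finset.sum_congr rfl fun i hi => ?_
  congr 1
  refine Finset.prod_congr rfl fun k hk => ?_
  exact h k (Finset.mem_Ico.mp hk).2

lemma prod_Ici_fin {N : ℕ} (a : ℕ → ℝ) (i : Fin N) :
    ∏ k ∈ Finset.Ici i, a k.val = ∏ k ∈ Finset.Ico i.val N, a k := by
  refine Finset.prod_bij (fun k _ => k.val) ?_ ?_ ?_ ?_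
  · intro k hk
    simp only [Finset.mem_Ici] at hk
    exact Finset.mem_Ico.mpr ⟨hk, k.isLt⟩
  · intro k₁ _ k₂ _ h
    exact Fin.ext h
  · intro k hk
    obtain ⟨h1, h2⟩ := Finset.mem_Ico.mp hk
    exact ⟨⟨k, h2⟩, Finset.mem_Ici.mpr h1, rfl⟩
  · intro k _; rfl

/-- Bridge from the Fin-indexed chain form to `nch`. -/
lemma chain_eq_nch {d N : ℕ} (x : Fin (N + 1) → (Fin d → ℝ)) (α : Fin N → ℝ) (a : ℕ → ℝ)
    (hag : ∀ k (h : k < N), a k = α ⟨k, h⟩) :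
    x (Fin.last N) + ∑ i : Fin N, (∏ k ∈ Finset.Ici i, α k) • (x i.castSucc - x i.succ) =
      nch (fun i => x ⟨min i N, by omega⟩) N a := by
  unfold nch
  have hXN : (x ⟨min N N, by omega⟩ : Fin d → ℝ) = x (Fin.last N) := by
    ext
    simp [Fin.last]
  set F : ℕ → (Fin d → ℝ) := fun j => (∏ k ∈ Finset.Ico j N, a k) •
      ((x ⟨min j N, by omega⟩ : Fin d → ℝ) - x ⟨min (j + 1) N, by omega⟩) with hF
  have key : ∀ i : Fin N,
      (∏ k ∈ Finset.Ici i, α k) • (x i.castSucc - x i.succ) = F i.val := by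
    intro i
    have h1 : ∏ k ∈ Finset.Ici i, α k = ∏ k ∈ Finset.Ico i.val N, a k := by
      rw [← prod_Ici_fin]
      refine Finset.prod_congr rfl fun k _ => ?_
      rw [hag k.val k.isLt]
    have h2 : i.castSucc = (⟨min i.val N, by omega⟩ : Fin (N + 1)) := by
      ext; simp only [Fin.coe_castSucc]; omega
    have h3 : i.succ = (⟨min (i.val + 1) N, by omega⟩ : Fin (N + 1)) := by
      ext; simp only [Fin.val_succ]; have := i.isLt; omega
    rw [hF]; simp only; rw [h1, h2, h3]
  calc x (Fin.last N) + ∑ i : Fin N, (∏ k ∈ Finset.Ici i, α k) • (x i.castSucc - x i.succ)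
      = x (Fin.last N) + ∑ i : Fin N, F i.val := by
        rw [Finset.sum_congr rfl fun i _ => key i]
    _ = _ := by rw [Fin.sum_univ_eq_sum_range F N]; simp only; rw [hXN]

lemma prod_mem_Icc {b : ℕ → ℝ} (s : Finset ℕ) (hb : ∀ k ∈ s, b k ∈ Set.Icc (0:ℝ) 1) :
    (∏ k ∈ s, b k) ∈ Set.Icc (0:ℝ) 1 :=
  ⟨Finset.prod_nonneg fun k hk => (hb k hk).1,
   Finset.prod_le_one (fun k hk => (hb k hk).1) (fun k hk => (hb k hk).2)⟩

/-- Realize an admissible coefficient sequence as suffix-products of numbers in `[0,1]`. -/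
lemma exists_alpha (N : ℕ) (β : ℕ → ℝ) (hN : β N = 1)
    (h0 : ∀ j < N, 0 ≤ β j) (hmono : ∀ j < N, β j ≤ β (j + 1)) :
    ∃ a : ℕ → ℝ, (∀ k, a k ∈ Set.Icc (0:ℝ) 1) ∧
      ∀ j ≤ N, ∏ k ∈ Finset.Ico j N, a k = β j := by
  classical
  have hβnonneg : ∀ j ≤ N, 0 ≤ β j := by
    intro j hj
    rcases eq_or_lt_of_le hj with h | h
    · rw [h, hN]; norm_num
    · exact h0 j h
  refine ⟨fun k => if h : k < N then (if β (k + 1) = 0 then 0 else β k / β (k + 1)) else 0,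
    ?_, ?_⟩
  · intro k
    by_cases h : k < N
    · simp only [dif_pos h]
      by_cases h2 : β (k + 1) = 0
      · simp [h2]
      · have hk1 : 0 ≤ β (k + 1) := hβnonneg (k + 1) h
        have hpos : 0 < β (k + 1) := lt_of_le_of_ne hk1 (Ne.symm h2)
        rw [if_neg h2]
        constructor
        · exact div_nonneg (h0 k h) hk1
        · rw [div_le_one hpos]; exact hmono k h
    · simp [h]
  · have main : ∀ t j, j + t = N →
        ∏ k ∈ Finset.Ico j N, (fun k => if h : k < N then
          (if β (k + 1) = 0 then 0 else β k / β (k + 1)) else 0) k = β j := by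
      intro t
      induction t with
      | zero =>
        intro j hj
        have : j = N := by omega
        subst this
        simp [hN]
      | succ t ih =>
        intro j hj
        have hjN : j < N := by omega
        rw [Finset.prod_eq_prod_Ico_succ_bot hjN]
        rw [ih (j + 1) (by omega)]
        simp only [dif_pos hjN]
        by_cases h2 : β (j + 1) = 0
        · rw [if_pos h2, h2, mul_zero]
          have := h0 j hjN
          have := hmono j hjN
          linarith [h2 ▸ hmono j hjN]
        · rw [if_neg h2, div_mul_cancel₀ _ h2]
    intro j hj
    exact main (N - j) j (by omega)

/-- Splitting the chain point of a concatenated chain. -/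
lemma nch_split {d n m : ℕ} (U V W : ℕ → (Fin d → ℝ)) (a : ℕ → ℝ)
    (hUV : ∀ i ≤ n, U i = V i) (hUW : ∀ j ≤ m, U (n + 1 + j) = W j) :
    nch U (n + m + 1) a =
      nch W m (fun j => a (n + 1 + j)) +
        (a n * ∏ k ∈ Finset.Ico 0 m, a (n + 1 + k)) • (nch V n a - W 0) := by
  set b : ℕ → ℝ := fun j => a (n + 1 + j) with hb
  set lam : ℝ := a n * ∏ k ∈ Finset.Ico 0 m, b k with hlam
  have hL : n + m + 1 = (n + 1) + m := by omega
  have hUL : U (n + m + 1) = W m := by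
    have : n + m + 1 = n + 1 + m := by omega
    rw [this]; exact hUW m le_rfl
  -- coefficient computations
  have hP : ∀ j < m, ∏ k ∈ Finset.Ico (n + 1 + j) (n + m + 1), a k =
      ∏ k ∈ Finset.Ico j m, b k := by
    intro j hj
    rw [Finset.prod_Ico_eq_prod_range, Finset.prod_Ico_eq_prod_range]
    have h1 : n + m + 1 - (n + 1 + j) = m - j := by omega
    rw [h1]
    refine Finset.prod_congr rfl fun k _ => ?_
    rw [hb]; simp only; congr 1; omega
  have hPn : ∏ k ∈ Finset.Ico n (n + m + 1), a k = lam := by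
    rw [Finset.prod_eq_prod_Ico_succ_bot (by omega : n < n + m + 1)]
    rw [hlam]
    congr 1
    rw [Finset.prod_Ico_eq_prod_range, Finset.prod_Ico_eq_prod_range]
    have h1 : n + m + 1 - (n + 1) = m - 0 := by omega
    rw [h1]
    refine Finset.prod_congr rfl fun k _ => ?_
    rw [hb]; simp only; congr 1; omega
  have hPi : ∀ i < n, ∏ k ∈ Finset.Ico i (n + m + 1), a k =
      (∏ k ∈ Finset.Ico i n, a k) * lam := by
    intro i hi
    rw [← Finset.prod_Ico_consecutive a (by omega : i ≤ n) (by omega : n ≤ n + m + 1), hPn]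
  unfold nch
  rw [hUL]
  have hsplit : ∑ i ∈ Finset.range (n + m + 1),
      (∏ k ∈ Finset.Ico i (n + m + 1), a k) • (U i - U (i + 1)) =
      (∑ i ∈ Finset.range n, ((∏ k ∈ Finset.Ico i n, a k) * lam) • (V i - V (i + 1)))
      + lam • (V n - W 0)
      + ∑ j ∈ Finset.range m, (∏ k ∈ Finset.Ico j m, b k) • (W j - W (j + 1)) := by
    rw [hL, Finset.sum_range_add, Finset.sum_range_succ]
    simp only [show n + 1 + m = n + m + 1 from by omega]
    congr 1
    · congr 1
      · refine Finset.sum_congr rfl fun i hi => ?_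
        have hi' : i < n := Finset.mem_range.mp hi
        rw [hPi i hi', hUV i (by omega), hUV (i + 1) (by omega)]
      · rw [hPn, hUV n le_rfl]
        have : U (n + 1) = W 0 := by
          have := hUW 0 (by omega); simpa using this
        rw [this]
    · refine Finset.sum_congr rfl fun j hj => ?_
      have hj' : j < m := Finset.mem_range.mp hj
      have e1 : U (n + 1 + j) = W j := hUW j (by omega)
      have e2 : U (n + 1 + j + 1) = W (j + 1) := by
        have h := hUW (j + 1) (by omega)
        rw [show n + 1 + j + 1 = n + 1 + (j + 1) from by omega]
        exact h
      rw [hP j hj', e1, e2]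
  rw [hsplit]
  have hlsum : ∑ i ∈ Finset.range n, ((∏ k ∈ Finset.Ico i n, a k) * lam) • (V i - V (i + 1)) =
      lam • ∑ i ∈ Finset.range n, (∏ k ∈ Finset.Ico i n, a k) • (V i - V (i + 1)) := by
    rw [Finset.smul_sum]
    refine Finset.sum_congr rfl fun i _ => ?_
    rw [smul_smul, mul_comm]
  rw [hlsum]
  simp only [smul_sub, smul_add]
  abel

/-- The convexity step: rewriting a shifted chain point as a convex combination. -/
lemma convex_step {d m : ℕ} (W : ℕ → (Fin d → ℝ)) (p : Fin d → ℝ) (lam : ℝ) (b c : ℕ → ℝ)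
    (h : ∀ j < m, (1 - lam) * ∏ k ∈ Finset.Ico j m, c k + lam = ∏ k ∈ Finset.Ico j m, b k) :
    nch W m b + lam • (p - W 0) = lam • p + (1 - lam) • nch W m c := by
  have hW0 : W 0 = W m + ∑ i ∈ Finset.range m, (W i - W (i + 1)) := by
    rw [Finset.sum_range_sub' W m]; abel
  unfold nch
  rw [hW0]
  have hterm : ∑ i ∈ Finset.range m, (∏ k ∈ Finset.Ico i m, b k) • (W i - W (i + 1)) =
      ∑ i ∈ Finset.range m, ((1 - lam) • ((∏ k ∈ Finset.Ico i m, c k) • (W i - W (i + 1)))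
        + lam • (W i - W (i + 1))) := by
    refine Finset.sum_congr rfl fun i hi => ?_
    rw [smul_smul, ← add_smul, h i (Finset.mem_range.mp hi)]
  rw [hterm, Finset.sum_add_distrib, ← Finset.smul_sum, ← Finset.smul_sum]
  simp only [smul_add, smul_sub, sub_smul, one_smul]
  abel

/-- Extension of a `Fin`-tuple to `ℕ` by clamping. -/
def Vext {d N : ℕ} (x : Fin (N + 1) → (Fin d → ℝ)) : ℕ → (Fin d → ℝ) :=
  fun i => x ⟨min i N, by omega⟩

lemma mem_chainForm_iff {d N : ℕ} (x : Fin (N + 1) → (Fin d → ℝ)) (y : Fin d → ℝ) :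
    y ∈ chainForm x ↔ ∃ a : ℕ → ℝ, (∀ k, a k ∈ Set.Icc (0:ℝ) 1) ∧
      y = nch (Vext x) N a := by
  constructor
  · rintro ⟨α, hα, rfl⟩
    refine ⟨fun k => if h : k < N then α ⟨k, h⟩ else 0, ?_, ?_⟩
    · intro k
      by_cases h : k < N
      · simpa [h] using hα ⟨k, h⟩
      · simp [h]
    · exact chain_eq_nch x α _ (fun k h => by simp [h])
  · rintro ⟨a, ha, rfl⟩
    exact ⟨fun i => a i.val, fun i => ha i.val,
      (chain_eq_nch x _ a (fun k h => rfl)).symm⟩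
/-- **Proposition 6.2 (convex hull in chain/C-representation).** The convex join
of the chain-form sets of `v₀, …, v_n` and `w₀, …, w_m` equals the chain-form
set of the concatenated tuple `(v₀, …, v_n, w₀, …, w_m)`, which uses
`(n + m + 2) − 1 = n + m + 1` basis vectors. -/
theorem chain_form_convex_join {d n m : ℕ} (v : Fin (n + 1) → (Fin d → ℝ))
    (w : Fin (m + 1) → (Fin d → ℝ)) :
    {x : Fin d → ℝ | ∃ p ∈ chainForm v, ∃ q ∈ chainForm w,
        ∃ l ∈ Set.Icc (0 : ℝ) 1, x = l • p + (1 - l) • q} =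
    chainForm (fun j : Fin (n + m + 1 + 1) =>
      Fin.append v w (Fin.cast (by omega) j)) := by
  classical
  set xc : Fin (n + m + 1 + 1) → (Fin d → ℝ) :=
    fun j => Fin.append v w (Fin.cast (by omega) j) with hxc
  -- relations between the clamped extensions
  have hUV : ∀ i ≤ n, Vext xc i = Vext v i := by
    intro i hi
    unfold Vext
    rw [hxc]
    simp only
    have h1 : Fin.cast (by omega : n + m + 1 + 1 = (n + 1) + (m + 1))
        (⟨min i (n + m + 1), by omega⟩ : Fin (n + m + 1 + 1)) =
        Fin.castAdd (m + 1) (⟨min i n, by omega⟩ : Fin (n + 1)) := by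
      ext
      simp only [Fin.coe_cast, Fin.coe_castAdd]
      omega
    rw [h1, Fin.append_left]
  have hUW : ∀ j ≤ m, Vext xc (n + 1 + j) = Vext w j := by
    intro j hj
    unfold Vext
    rw [hxc]
    simp only
    have h1 : Fin.cast (by omega : n + m + 1 + 1 = (n + 1) + (m + 1))
        (⟨min (n + 1 + j) (n + m + 1), by omega⟩ : Fin (n + m + 1 + 1)) =
        Fin.natAdd (n + 1) (⟨min j m, by omega⟩ : Fin (m + 1)) := by
      ext
      simp only [Fin.coe_cast, Fin.coe_natAdd]
      omega
    rw [h1, Fin.append_right]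
  ext y
  simp only [Set.mem_setOf_eq]
  constructor
  · -- convex join ⊆ chain form of concatenation
    rintro ⟨p, hp, q, hq, l, hl, rfl⟩
    obtain ⟨av, hav, rfl⟩ := (mem_chainForm_iff v p).mp hp
    obtain ⟨bw, hbw, rfl⟩ := (mem_chainForm_iff w q).mp hq
    rw [mem_chainForm_iff]
    have hprodnn : ∀ j, (0:ℝ) ≤ ∏ k ∈ Finset.Ico j m, bw k :=
      fun j => Finset.prod_nonneg fun k _ => (hbw k).1
    have hprodle1 : ∀ j, (∏ k ∈ Finset.Ico j m, bw k) ≤ 1 :=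
      fun j => Finset.prod_le_one (fun k _ => (hbw k).1) (fun k _ => (hbw k).2)
    -- the target suffix-product sequence
    obtain ⟨bb, hbb, hbbp⟩ := exists_alpha m
      (fun j => l + (1 - l) * ∏ k ∈ Finset.Ico j m, bw k)
      (by rw [Finset.Ico_self, Finset.prod_empty]; ring)
      (by intro j hj; nlinarith [hprodnn j, hl.1, hl.2])
      (by
        intro j hj
        have hstep : (∏ k ∈ Finset.Ico j m, bw k) ≤ ∏ k ∈ Finset.Ico (j + 1) m, bw k := by
          rw [Finset.prod_eq_prod_Ico_succ_bot hj]
          exact mul_le_of_le_one_left (hprodnn (j + 1)) (hbw j).2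
        nlinarith [hl.2])
    set β0 : ℝ := l + (1 - l) * ∏ k ∈ Finset.Ico 0 m, bw k with hβ0
    have hlβ0 : l ≤ β0 := by nlinarith [hprodnn 0, hl.1, hl.2]
    have hβ0nn : 0 ≤ β0 := by nlinarith [hprodnn 0, hl.1, hl.2]
    set an : ℝ := if β0 = 0 then 0 else l / β0 with han
    have han01 : an ∈ Set.Icc (0:ℝ) 1 := by
      rw [han]
      by_cases h : β0 = 0
      · simp [h]
      · have hpos : 0 < β0 := lt_of_le_of_ne hβ0nn (Ne.symm h)
        rw [if_neg h]
        exact ⟨div_nonneg hl.1 hβ0nn, by rw [div_le_one hpos]; exact hlβ0⟩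
    have hanl : an * β0 = l := by
      rw [han]
      by_cases h : β0 = 0
      · rw [if_pos h, zero_mul]
        have : l ≤ 0 := h ▸ hlβ0
        linarith [hl.1]
      · rw [if_neg h]
        field_simp
    set aa : ℕ → ℝ := fun k => if k < n then av k else if k = n then an else bb (k - (n + 1))
      with haadef
    have haa : ∀ k, aa k ∈ Set.Icc (0:ℝ) 1 := by
      intro k
      rw [haadef]
      simp only
      by_cases h1 : k < n
      · rw [if_pos h1]; exact hav k
      · rw [if_neg h1]
        by_cases h2 : k = n
        · rw [if_pos h2]; exact han01
        · rw [if_neg h2]; exact hbb _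
    refine ⟨aa, haa, ?_⟩
    have e1 : (fun j => aa (n + 1 + j)) = bb := by
      funext j
      rw [haadef]
      simp only
      rw [if_neg (by omega), if_neg (by omega)]
      congr 1
      omega
    have e2 : nch (Vext v) n aa = nch (Vext v) n av :=
      nch_congr _ _ (fun k hk => by rw [haadef]; simp only; rw [if_pos hk])
    have e3 : aa n = an := by rw [haadef]; simp
    have e4 : (∏ k ∈ Finset.Ico 0 m, aa (n + 1 + k)) = β0 := by
      have : (∏ k ∈ Finset.Ico 0 m, aa (n + 1 + k)) = ∏ k ∈ Finset.Ico 0 m, bb k :=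
        Finset.prod_congr rfl fun k _ => congrFun e1 k
      rw [this]
      exact hbbp 0 (Nat.zero_le m)
    have hcond : ∀ j < m, (1 - l) * ∏ k ∈ Finset.Ico j m, bw k + l =
        ∏ k ∈ Finset.Ico j m, bb k := by
      intro j hj
      rw [hbbp j hj.le]
      ring
    calc l • nch (Vext v) n av + (1 - l) • nch (Vext w) m bw
        = nch (Vext w) m bb + l • (nch (Vext v) n av - Vext w 0) :=
          (convex_step (Vext w) (nch (Vext v) n av) l bb bw hcond).symm
      _ = nch (Vext w) m (fun j => aa (n + 1 + j)) +
            (aa n * ∏ k ∈ Finset.Ico 0 m, aa (n + 1 + k)) •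
              (nch (Vext v) n aa - Vext w 0) := by
          rw [e2, e3, e4, hanl, e1]
      _ = nch (Vext xc) (n + m + 1) aa :=
          (nch_split (Vext xc) (Vext v) (Vext w) aa hUV hUW).symm
  · -- chain form of concatenation ⊆ convex join
    intro hy
    obtain ⟨a, ha, rfl⟩ := (mem_chainForm_iff xc y).mp hy
    set b : ℕ → ℝ := fun j => a (n + 1 + j) with hbdef
    have hb : ∀ k, b k ∈ Set.Icc (0:ℝ) 1 := fun k => ha _
    have hBnn : ∀ j, (0:ℝ) ≤ ∏ k ∈ Finset.Ico j m, b k :=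
      fun j => Finset.prod_nonneg fun k _ => (hb k).1
    have hBle1 : ∀ j, (∏ k ∈ Finset.Ico j m, b k) ≤ 1 :=
      fun j => Finset.prod_le_one (fun k _ => (hb k).1) (fun k _ => (hb k).2)
    set lam : ℝ := a n * ∏ k ∈ Finset.Ico 0 m, b k with hlamdef
    have hlam01 : lam ∈ Set.Icc (0:ℝ) 1 := by
      rw [hlamdef]
      exact ⟨mul_nonneg (ha n).1 (hBnn 0),
        mul_le_one₀ (ha n).2 (hBnn 0) (hBle1 0)⟩
    have hB0le : ∀ j ≤ m, (∏ k ∈ Finset.Ico 0 m, b k) ≤ ∏ k ∈ Finset.Ico j m, b k := by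
      intro j hj
      rw [← Finset.prod_Ico_consecutive b (Nat.zero_le j) hj]
      exact mul_le_of_le_one_left (hBnn j)
        (Finset.prod_le_one (fun k _ => (hb k).1) (fun k _ => (hb k).2))
    have hlamle : ∀ j ≤ m, lam ≤ ∏ k ∈ Finset.Ico j m, b k := by
      intro j hj
      rw [hlamdef]
      exact le_trans (mul_le_of_le_one_left (hBnn 0) (ha n).2) (hB0le j hj)
    have hall : lam = 1 → ∀ j ≤ m, (∏ k ∈ Finset.Ico j m, b k) = 1 := by
      intro h1 j hj
      exact le_antisymm (hBle1 j) (h1 ▸ hlamle j hj)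
    obtain ⟨cc, hcc, hccp⟩ := exists_alpha m
      (fun j => if lam = 1 then 1 else ((∏ k ∈ Finset.Ico j m, b k) - lam) / (1 - lam))
      (by
        by_cases h1 : lam = 1
        · rw [if_pos h1]
        · rw [if_neg h1, Finset.Ico_self, Finset.prod_empty]
          exact div_self (sub_ne_zero.mpr (Ne.symm h1)))
      (by
        intro j hj
        by_cases h1 : lam = 1
        · rw [if_pos h1]; norm_num
        · rw [if_neg h1]
          exact div_nonneg (sub_nonneg.mpr (hlamle j hj.le))
            (sub_nonneg.mpr hlam01.2))
      (by
        intro j hj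
        by_cases h1 : lam = 1
        · simp [h1]
        · simp only [if_neg h1]
          have hstep : (∏ k ∈ Finset.Ico j m, b k) ≤ ∏ k ∈ Finset.Ico (j + 1) m, b k := by
            rw [Finset.prod_eq_prod_Ico_succ_bot hj]
            exact mul_le_of_le_one_left (hBnn (j + 1)) (hb j).2
          exact div_le_div_of_nonneg_right (by linarith) (by linarith [hlam01.2]))
    refine ⟨nch (Vext v) n a, ?_, nch (Vext w) m cc, ?_, lam, hlam01, ?_⟩
    · exact (mem_chainForm_iff v _).mpr ⟨a, ha, rfl⟩
    · exact (mem_chainForm_iff w _).mpr ⟨cc, hcc, rfl⟩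
    have hcond : ∀ j < m, (1 - lam) * ∏ k ∈ Finset.Ico j m, cc k + lam =
        ∏ k ∈ Finset.Ico j m, b k := by
      intro j hj
      rw [hccp j hj.le]
      by_cases h1 : lam = 1
      · rw [if_pos h1, h1]
        rw [hall h1 j hj.le]
        ring
      · rw [if_neg h1, mul_div_cancel₀ _ (sub_ne_zero.mpr (Ne.symm h1))]
        ring
    calc nch (Vext xc) (n + m + 1) a
        = nch (Vext w) m (fun j => a (n + 1 + j)) +
            (a n * ∏ k ∈ Finset.Ico 0 m, a (n + 1 + k)) • (nch (Vext v) n a - Vext w 0) :=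
          nch_split (Vext xc) (Vext v) (Vext w) a hUV hUW
      _ = nch (Vext w) m b + lam • (nch (Vext v) n a - Vext w 0) := by rw [hlamdef, hbdef]
      _ = lam • nch (Vext v) n a + (1 - lam) • nch (Vext w) m cc :=
          convex_step (Vext w) (nch (Vext v) n a) lam b cc hcond
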